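/- For all k, l, m ∈ {1,2,3}, the ternary anti-commutator of full ternary Σ-matrices satisfies {Σ_k, Σ_l, Σ_m}^[3] = 2δ_{kl}Σ_m + 2δ_{km}Σ_l + 2δ_{lm}Σ_k. -/

import Mathlib

open Matrix Complex

/-- The Pauli matrices σ₀, σ₁, σ₂, σ₃. -/
noncomputable def pauli : Fin 4 → Matrix (Fin 2) (Fin 2) ℂ
  | 0 => !![1, 0; 0, 1]
  | 1 => !![0, 1; 1, 0]
  | 2 => !![0, -I; I, 0]
  | 3 => !![1, 0; 0, -1]

/-- The full ternary Σ-matrix Σ_j = [[0, σ_j],[σ_j, 0]]. -/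
noncomputable def Sig (j : Fin 4) : Matrix (Fin 2 ⊕ Fin 2) (Fin 2 ⊕ Fin 2) ℂ :=
  Matrix.fromBlocks 0 (pauli j) (pauli j) 0

/-- The Kronecker delta (with values in ℂ). -/
noncomputable def kron (k l : Fin 3) : ℂ := if k = l then 1 else 0

/-- The ternary anti-commutator {a,b,c}^[3]. -/
noncomputable def tacomm {n : Type*} [Fintype n] (a b c : Matrix n n ℂ) : Matrix n n ℂ :=
  a * b * c + b * c * a + c * a * b + a * c * b + b * a * c + c * b * a

set_option linter.unreachableTactic false in
set_option linter.unusedTactic false in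
set_option maxHeartbeats 2000000 in
lemma pauli_tac (k l m : Fin 3) :
    tacomm (pauli k.succ) (pauli l.succ) (pauli m.succ) =
      (2 * kron k l) • pauli m.succ + (2 * kron k m) • pauli l.succ +
        (2 * kron l m) • pauli k.succ := by
  fin_cases k <;> fin_cases l <;> fin_cases m <;>
    · simp only [tacomm, kron, Fin.isValue, Fin.succ, Fin.mk.injEq, Fin.reduceEq, reduceIte]
      norm_num [pauli, Matrix.mul_fin_two, Matrix.smul_of, Matrix.smul_cons, Matrix.smul_empty]
      all_goals first
      | rfl
      | (funext i j; fin_cases i <;> fin_cases j <;> (norm_num; try ring))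
      | (ext i j <;> fin_cases i <;> fin_cases j <;> (norm_num; try ring))
      | (refine ⟨?_, ?_⟩ <;> ring)

lemma tacomm_blocks (a b c : Matrix (Fin 2) (Fin 2) ℂ) :
    tacomm (fromBlocks 0 a a 0) (fromBlocks 0 b b 0) (fromBlocks 0 c c 0) =
      fromBlocks 0 (tacomm a b c) (tacomm a b c) 0 := by
  simp [tacomm, Matrix.fromBlocks_multiply, Matrix.fromBlocks_add]

theorem full_sigma_ternary_anticommutator (k l m : Fin 3) :
    tacomm (Sig k.succ) (Sig l.succ) (Sig m.succ) =
      (2 * kron k l) • Sig m.succ + (2 * kron k m) • Sig l.succ +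
        (2 * kron l m) • Sig k.succ := by
  simp only [Sig, tacomm_blocks, pauli_tac, Matrix.fromBlocks_smul, Matrix.fromBlocks_add,
    smul_zero, add_zero]
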